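/- Let G be a (P_5, K_3)-free graph, and let S and T be disjoint stable sets of G such that every vertex of T has a neighbour in S (T may be empty). Then G admits a proper 3-coloring in which all vertices of S receive color 1 and all vertices of T receive color 2. -/

import Mathlib

open SimpleGraph

/-- The paw: a triangle 0,1,2 plus vertex 3 adjacent only to 0. -/
def pawGraph : SimpleGraph (Fin 4) :=
  SimpleGraph.fromEdgeSet {s(0,1), s(0,2), s(1,2), s(0,3)}

/-- The HVN: a K₄ on 0,1,2,3 plus vertex 4 adjacent to exactly 0 and 1. -/
def hvnGraph : SimpleGraph (Fin 5) :=
  SimpleGraph.fromEdgeSet {s(0,1), s(0,2), s(0,3), s(1,2), s(1,3), s(2,3), s(4,0), s(4,1)}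

/-- The T-5-wheel: 5-cycle 0-1-2-3-4-0 plus vertex 5 adjacent to the three consecutive
vertices 4, 0, 1. -/
def t5WheelGraph : SimpleGraph (Fin 6) :=
  SimpleGraph.fromEdgeSet {s(0,1), s(1,2), s(2,3), s(3,4), s(4,0), s(5,4), s(5,0), s(5,1)}

/-- The Y-5-wheel: 5-cycle 0-1-2-3-4-0 plus vertex 5 adjacent to 0, 1, 3
(three non-consecutive vertices). -/
def y5WheelGraph : SimpleGraph (Fin 6) :=
  SimpleGraph.fromEdgeSet {s(0,1), s(1,2), s(2,3), s(3,4), s(4,0), s(5,0), s(5,1), s(5,3)}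

/-- `G` contains an induced copy of `H`: an injection preserving and reflecting adjacency. -/
def ContainsInduced {V W : Type*} (G : SimpleGraph V) (H : SimpleGraph W) : Prop :=
  ∃ f : W ↪ V, ∀ a b : W, H.Adj a b ↔ G.Adj (f a) (f b)

/-- `G` is `H`-free: no induced copy of `H`. -/
def InducedFree {V W : Type*} (G : SimpleGraph V) (H : SimpleGraph W) : Prop :=
  ¬ ContainsInduced G H

/-- `v` lists the vertices of an induced (chordless) 5-cycle of `G`, in order. -/
def IsInducedC5 {V : Type*} (G : SimpleGraph V) (v : ZMod 5 → V) : Prop :=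
  Function.Injective v ∧ ∀ i j : ZMod 5, G.Adj (v i) (v j) ↔ (j = i + 1 ∨ j = i - 1)

/-- A `P₅`-free graph has no induced path on five vertices. -/
lemma noP5_of_path {V : Type*} {G : SimpleGraph V} (hP5 : InducedFree G (pathGraph 5))
    {v0 v1 v2 v3 v4 : V}
    (e01 : G.Adj v0 v1) (e12 : G.Adj v1 v2) (e23 : G.Adj v2 v3) (e34 : G.Adj v3 v4)
    (n02 : ¬ G.Adj v0 v2) (n03 : ¬ G.Adj v0 v3) (n04 : ¬ G.Adj v0 v4)
    (n13 : ¬ G.Adj v1 v3) (n14 : ¬ G.Adj v1 v4) (n24 : ¬ G.Adj v2 v4) : False := by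
  apply hP5
  have d01 : v0 ≠ v1 := e01.ne
  have d12 : v1 ≠ v2 := e12.ne
  have d23 : v2 ≠ v3 := e23.ne
  have d34 : v3 ≠ v4 := e34.ne
  have d02 : v0 ≠ v2 := by intro h; rw [h] at n03; exact n03 e23
  have d03 : v0 ≠ v3 := by intro h; rw [h] at n04; exact n04 e34
  have d04 : v0 ≠ v4 := by intro h; rw [h] at n03; exact n03 e34.symm
  have d13 : v1 ≠ v3 := by intro h; rw [h] at e01; exact n03 e01
  have d14 : v1 ≠ v4 := by intro h; rw [h] at e01; exact n04 e01
  have d24 : v2 ≠ v4 := by intro h; rw [h] at e12; exact n14 e12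
  have e10 := e01.symm
  have e21 := e12.symm
  have e32 := e23.symm
  have e43 := e34.symm
  have n20 : ¬ G.Adj v2 v0 := fun h => n02 h.symm
  have n30 : ¬ G.Adj v3 v0 := fun h => n03 h.symm
  have n40 : ¬ G.Adj v4 v0 := fun h => n04 h.symm
  have n31 : ¬ G.Adj v3 v1 := fun h => n13 h.symm
  have n41 : ¬ G.Adj v4 v1 := fun h => n14 h.symm
  have n42 : ¬ G.Adj v4 v2 := fun h => n24 h.symm
  refine ⟨⟨fun i : Fin 5 =>
    if i = 0 then v0 else if i = 1 then v1 else if i = 2 then v2 else if i = 3 then v3 else v4,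
    ?_⟩, ?_⟩
  · intro a b hab
    fin_cases a <;> fin_cases b <;> simp_all
  · intro a b
    show (pathGraph 5).Adj a b ↔ G.Adj
      (if a = 0 then v0 else if a = 1 then v1 else if a = 2 then v2 else if a = 3 then v3 else v4)
      (if b = 0 then v0 else if b = 1 then v1 else if b = 2 then v2 else if b = 3 then v3 else v4)
    fin_cases a <;> fin_cases b <;> simp_all [pathGraph_adj] <;> decide

/-- The key structural fact: if `M` and `N` are disjoint stable sets such that every vertex
outside `M` has a neighbour in `M` and every vertex outside `M ∪ N` has a neighbour in `N`,
then in a `(P₅,K₃)`-free graph the set of remaining vertices is stable. -/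
lemma rest_stable {V : Type*} {G : SimpleGraph V} (hP5 : InducedFree G (pathGraph 5))
    (tf : ∀ {x y z : V}, G.Adj x y → G.Adj y z → G.Adj x z → False)
    {M N : Set V}
    (hM : ∀ a ∈ M, ∀ b ∈ M, ¬ G.Adj a b) (hN : ∀ a ∈ N, ∀ b ∈ N, ¬ G.Adj a b)
    (hMN : ∀ x ∈ N, x ∉ M)
    (hDomS : ∀ v ∉ M, ∃ s ∈ M, G.Adj v s)
    (hDomT : ∀ v, v ∉ M → v ∉ N → ∃ t ∈ N, G.Adj v t)
    {u w : V} (huM : u ∉ M) (huN : u ∉ N) (hwM : w ∉ M) (hwN : w ∉ N)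
    (huw : G.Adj u w) : False := by
  obtain ⟨su, hsuM, hsu⟩ := hDomS u huM
  obtain ⟨sw, hswM, hsw⟩ := hDomS w hwM
  obtain ⟨t, htN, ht⟩ := hDomT u huM huN
  obtain ⟨t', ht'N, ht'⟩ := hDomT w hwM hwN
  -- basic non-adjacencies
  have n_su_w : ¬ G.Adj su w := fun h => tf huw h.symm hsu
  have n_sw_u : ¬ G.Adj sw u := fun h => tf huw hsw h.symm
  have n_t_w : ¬ G.Adj t w := fun h => tf huw h.symm ht
  have n_t'_u : ¬ G.Adj t' u := fun h => tf huw ht' h.symm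
  have n_su_t : ¬ G.Adj su t := fun h => tf hsu h ht
  have n_t'_sw : ¬ G.Adj t' sw := fun h => tf ht' h hsw
  have n_su_sw : ¬ G.Adj su sw := hM su hsuM sw hswM
  have n_t_t' : ¬ G.Adj t t' := hN t htN t' ht'N
  by_cases hc : G.Adj t sw
  · by_cases hb : G.Adj su t'
    · -- induced P5 : t - sw - w - t' - su
      exact noP5_of_path hP5 hc hsw.symm ht' hb.symm
        n_t_w n_t_t' (fun h => n_su_t h.symm) (fun h => n_t'_sw h.symm)
        (fun h => n_su_sw h.symm) (fun h => n_su_w h.symm)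
    · obtain ⟨s2, hs2M, hts2⟩ := hDomS t' (hMN t' ht'N)
      have n_s2_w : ¬ G.Adj s2 w := fun h => tf ht' hts2 h.symm
      have n_s2_su : ¬ G.Adj s2 su := hM s2 hs2M su hsuM
      have n_s2_sw : ¬ G.Adj s2 sw := hM s2 hs2M sw hswM
      by_cases hh : G.Adj t s2
      · -- induced P5 : su - u - t - s2 - t'
        have n_u_s2 : ¬ G.Adj u s2 := fun h => tf ht hh h
        exact noP5_of_path hP5 hsu.symm ht hh hts2.symm
          n_su_t (fun h => n_s2_su h.symm) hb n_u_s2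
          (fun h => n_t'_u h.symm) n_t_t'
      · -- induced P5 : t - sw - w - t' - s2
        exact noP5_of_path hP5 hc hsw.symm ht' hts2
          n_t_w n_t_t' hh (fun h => n_t'_sw h.symm)
          (fun h => n_s2_sw h.symm) (fun h => n_s2_w h.symm)
  · obtain ⟨s1, hs1M, hts1⟩ := hDomS t (hMN t htN)
    have n_s1_u : ¬ G.Adj s1 u := fun h => tf ht hts1 h.symm
    have n_s1_su : ¬ G.Adj s1 su := hM s1 hs1M su hsuM
    have n_s1_sw : ¬ G.Adj s1 sw := hM s1 hs1M sw hswM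
    by_cases h1 : G.Adj s1 w
    · have n_s1_t' : ¬ G.Adj s1 t' := fun h => tf h1 ht' h
      by_cases hb : G.Adj su t'
      · -- induced P5 : t - s1 - w - t' - su
        exact noP5_of_path hP5 hts1 h1 ht' hb.symm
          n_t_w n_t_t' (fun h => n_su_t h.symm) n_s1_t'
          n_s1_su (fun h => n_su_w h.symm)
      · obtain ⟨s2, hs2M, hts2⟩ := hDomS t' (hMN t' ht'N)
        have n_s2_w : ¬ G.Adj s2 w := fun h => tf ht' hts2 h.symm
        have n_s2_s1 : ¬ G.Adj s2 s1 := hM s2 hs2M s1 hs1M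
        have n_s2_su : ¬ G.Adj s2 su := hM s2 hs2M su hsuM
        by_cases hh : G.Adj t s2
        · -- induced P5 : su - u - t - s2 - t'
          have n_u_s2 : ¬ G.Adj u s2 := fun h => tf ht hh h
          exact noP5_of_path hP5 hsu.symm ht hh hts2.symm
            n_su_t (fun h => n_s2_su h.symm) hb n_u_s2
            (fun h => n_t'_u h.symm) n_t_t'
        · -- induced P5 : t - s1 - w - t' - s2
          exact noP5_of_path hP5 hts1 h1 ht' hts2
            n_t_w n_t_t' hh n_s1_t'
            (fun h => n_s2_s1 h.symm) (fun h => n_s2_w h.symm)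
    · -- induced P5 : s1 - t - u - w - sw
      exact noP5_of_path hP5 hts1.symm ht.symm huw hsw
        n_s1_u h1 n_s1_sw n_t_w hc (fun h => n_sw_u h.symm)

/-- A (P₅,K₃)-free graph has a proper 3-coloring giving a prescribed stable set `S` color 0
and a prescribed stable set `T`, each of whose vertices has a neighbour in `S`, color 1. -/
theorem p5_k3_free_three_coloring {V : Type*} (G : SimpleGraph V)
    (hP5 : InducedFree G (pathGraph 5)) (hK3 : G.CliqueFree 3)
    (S T : Set V) (hdisj : Disjoint S T)
    (hS : ∀ u ∈ S, ∀ w ∈ S, ¬ G.Adj u w) (hT : ∀ u ∈ T, ∀ w ∈ T, ¬ G.Adj u w)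
    (hTS : ∀ t ∈ T, ∃ s ∈ S, G.Adj t s) :
    ∃ c : G.Coloring (Fin 3), (∀ u ∈ S, c u = 0) ∧ (∀ u ∈ T, c u = 1) := by
  classical
  have tf : ∀ {x y z : V}, G.Adj x y → G.Adj y z → G.Adj x z → False := by
    intro x y z hxy hyz hxz
    exact hK3 {x, y, z} (SimpleGraph.is3Clique_triple_iff.mpr ⟨hxy, hxz, hyz⟩)
  -- Zorn: extend S to a maximal stable set M disjoint from T
  obtain ⟨M, hSM, hMmax⟩ := zorn_subset_nonempty
      {A : Set V | S ⊆ A ∧ Disjoint A T ∧ ∀ a ∈ A, ∀ b ∈ A, ¬ G.Adj a b}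
      (fun c hc hchain hne => by
        obtain ⟨A0, hA0⟩ := hne
        refine ⟨⋃₀ c, ⟨(hc hA0).1.trans (Set.subset_sUnion_of_mem hA0),
          Set.disjoint_sUnion_left.mpr (fun A hA => (hc hA).2.1), ?_⟩,
          fun s hs => Set.subset_sUnion_of_mem hs⟩
        rintro a ⟨A, hAc, haA⟩ b ⟨B, hBc, hbB⟩
        rcases hchain.total hAc hBc with h | h
        · exact (hc hBc).2.2 a (h haA) b hbB
        · exact (hc hAc).2.2 a haA b (h hbB))
      S ⟨Set.Subset.rfl, hdisj, hS⟩
  have hMmem := hMmax.prop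
  have hMstable : ∀ a ∈ M, ∀ b ∈ M, ¬ G.Adj a b := hMmem.2.2
  have hMT : Disjoint M T := hMmem.2.1
  have hDomS : ∀ v ∉ M, ∃ s ∈ M, G.Adj v s := by
    intro v hv
    by_cases hvT : v ∈ T
    · obtain ⟨s, hsS, hadj⟩ := hTS v hvT
      exact ⟨s, hSM hsS, hadj⟩
    · by_contra hno
      push_neg at hno
      have hmem : insert v M ∈
          {A : Set V | S ⊆ A ∧ Disjoint A T ∧ ∀ a ∈ A, ∀ b ∈ A, ¬ G.Adj a b} := by
        refine ⟨hSM.trans (Set.subset_insert _ _),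
          Set.disjoint_left.mpr ?_, ?_⟩
        · rintro a (rfl | haM) hat
          · exact hvT hat
          · exact Set.disjoint_left.mp hMT haM hat
        · rintro a (rfl | haM) b (rfl | hbM)
          · exact G.irrefl
          · exact fun h => hno b hbM h
          · exact fun h => hno a haM h.symm
          · exact hMstable a haM b hbM
      have := hMmax.le_of_ge hmem (Set.subset_insert v M)
      exact hv (this (Set.mem_insert v M))
  -- Zorn: extend T to a maximal stable set N disjoint from M
  obtain ⟨N, hTN, hNmax⟩ := zorn_subset_nonempty
      {A : Set V | T ⊆ A ∧ Disjoint A M ∧ ∀ a ∈ A, ∀ b ∈ A, ¬ G.Adj a b}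
      (fun c hc hchain hne => by
        obtain ⟨A0, hA0⟩ := hne
        refine ⟨⋃₀ c, ⟨(hc hA0).1.trans (Set.subset_sUnion_of_mem hA0),
          Set.disjoint_sUnion_left.mpr (fun A hA => (hc hA).2.1), ?_⟩,
          fun s hs => Set.subset_sUnion_of_mem hs⟩
        rintro a ⟨A, hAc, haA⟩ b ⟨B, hBc, hbB⟩
        rcases hchain.total hAc hBc with h | h
        · exact (hc hBc).2.2 a (h haA) b hbB
        · exact (hc hAc).2.2 a haA b (h hbB))
      T ⟨Set.Subset.rfl, hMT.symm, hT⟩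
  have hNmem := hNmax.prop
  have hNstable : ∀ a ∈ N, ∀ b ∈ N, ¬ G.Adj a b := hNmem.2.2
  have hNM : Disjoint N M := hNmem.2.1
  have hMN : ∀ x ∈ N, x ∉ M := fun x hx => Set.disjoint_left.mp hNM hx
  have hDomT : ∀ v, v ∉ M → v ∉ N → ∃ t ∈ N, G.Adj v t := by
    intro v hvM hvN
    by_contra hno
    push_neg at hno
    have hmem : insert v N ∈
        {A : Set V | T ⊆ A ∧ Disjoint A M ∧ ∀ a ∈ A, ∀ b ∈ A, ¬ G.Adj a b} := by
      refine ⟨hTN.trans (Set.subset_insert _ _),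
        Set.disjoint_left.mpr ?_, ?_⟩
      · rintro a (rfl | haN) hat
        · exact hvM hat
        · exact Set.disjoint_left.mp hNM haN hat
      · rintro a (rfl | haN) b (rfl | hbN)
        · exact G.irrefl
        · exact fun h => hno b hbN h
        · exact fun h => hno a haN h.symm
        · exact hNstable a haN b hbN
    have := hNmax.le_of_ge hmem (Set.subset_insert v N)
    exact hvN (this (Set.mem_insert v N))
  -- the coloring
  refine ⟨SimpleGraph.Coloring.mk
    (fun v => if v ∈ M then 0 else if v ∈ N then 1 else 2) ?_, ?_, ?_⟩
  · intro v w hvw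
    by_cases hvM : v ∈ M <;> by_cases hwM : w ∈ M
    · exact absurd hvw (hMstable v hvM w hwM)
    · by_cases hwN : w ∈ N <;> simp [hvM, hwM, hwN]
    · by_cases hvN : v ∈ N <;> simp [hvM, hwM, hvN]
    · by_cases hvN : v ∈ N <;> by_cases hwN : w ∈ N
      · exact absurd hvw (hNstable v hvN w hwN)
      · simp [hvM, hwM, hvN, hwN]
      · simp [hvM, hwM, hvN, hwN]
      · exact absurd hvw
          (fun h => rest_stable hP5 tf hMstable hNstable hMN hDomS hDomT
            hvM hvN hwM hwN h)
  · intro u hu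
    show (if u ∈ M then (0 : Fin 3) else if u ∈ N then 1 else 2) = 0
    rw [if_pos (hSM hu)]
  · intro u hu
    have huN : u ∈ N := hTN hu
    have huM : u ∉ M := Set.disjoint_left.mp hMT.symm hu
    show (if u ∈ M then (0 : Fin 3) else if u ∈ N then 1 else 2) = 1
    rw [if_neg huM, if_pos huN]
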